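/- For every real β with β ≥ n and positive functions r_1,…,r_n : Z → ℝ (r_i(z) > 0 for all z), one has log E_q[∏_{i=1}^n r_i] ≤ (1/β)·Σ_{i=1}^n log E_q[r_i^β]. (This is the constant-free case of Theorem 1, where the constant C(T) vanishes for β ≥ n; it follows by combining the Rényi upper bound with a generalized Hölder inequality.) -/

import Mathlib

open Finset Real

/-- Weighted two-function Hölder for finite sums with positive weights. -/
lemma weighted_holder {Z : Type*} [Fintype Z] (q f g : Z → ℝ)
    (hq : ∀ z, 0 < q z) (hf : ∀ z, 0 ≤ f z) (hg : ∀ z, 0 ≤ g z)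
    {p p' : ℝ} (hpq : p.HolderConjugate p') :
    ∑ z, q z * (f z * g z) ≤
      (∑ z, q z * f z ^ p) ^ (1 / p) * (∑ z, q z * g z ^ p') ^ (1 / p') := by
  have h := Real.inner_le_Lp_mul_Lq_of_nonneg (s := Finset.univ)
      (f := fun z => q z ^ (1 / p) * f z) (g := fun z => q z ^ (1 / p') * g z) hpq
      (fun z _ => mul_nonneg (Real.rpow_nonneg (hq z).le _) (hf z))
      (fun z _ => mul_nonneg (Real.rpow_nonneg (hq z).le _) (hg z))
  have e1 : ∀ z : Z, (q z ^ (1 / p) * f z) * (q z ^ (1 / p') * g z) = q z * (f z * g z) := by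
    intro z
    have hq' : q z ^ (1 / p) * q z ^ (1 / p') = q z := by
      rw [← Real.rpow_add (hq z), one_div, one_div, hpq.inv_add_inv_eq_one, Real.rpow_one]
    calc (q z ^ (1 / p) * f z) * (q z ^ (1 / p') * g z)
        = (q z ^ (1 / p) * q z ^ (1 / p')) * (f z * g z) := by ring
      _ = q z * (f z * g z) := by rw [hq']
  have e2 : ∀ z : Z, (q z ^ (1 / p) * f z) ^ p = q z * f z ^ p := by
    intro z
    rw [Real.mul_rpow (Real.rpow_nonneg (hq z).le _) (hf z), ← Real.rpow_mul (hq z).le,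
      one_div_mul_cancel hpq.ne_zero, Real.rpow_one]
  have e3 : ∀ z : Z, (q z ^ (1 / p') * g z) ^ p' = q z * g z ^ p' := by
    intro z
    rw [Real.mul_rpow (Real.rpow_nonneg (hq z).le _) (hg z), ← Real.rpow_mul (hq z).le,
      one_div_mul_cancel hpq.symm.ne_zero, Real.rpow_one]
  simpa only [e1, e2, e3] using h

/-- Generalized weighted Hölder inequality for a product of `m` functions, exponent `β ≥ m`. -/
lemma holder_prod {Z : Type*} [Fintype Z] (q : Z → ℝ) (hq : ∀ z, 0 < q z)
    (hq1 : ∑ z, q z = 1) :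
    ∀ (m : ℕ) (r : Fin m → Z → ℝ), (∀ i z, 0 < r i z) → ∀ β : ℝ, (m : ℝ) ≤ β →
    ∑ z, q z * ∏ i, r i z ≤ ∏ i, (∑ z, q z * r i z ^ β) ^ (1 / β) := by
  intro m
  induction m with
  | zero => intro r hr β hβ; simp [hq1]
  | succ m ih =>
    intro r hr β hβ
    rcases Nat.eq_zero_or_pos m with hm | hm
    · subst hm
      have hβ1 : (1 : ℝ) ≤ β := by simpa using hβ
      have h := Real.inner_le_weight_mul_Lp_of_nonneg Finset.univ hβ1 q (fun z => r 0 z)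
        (fun z => (hq z).le) (fun z => (hr 0 z).le)
      simp only [hq1, Real.one_rpow, one_mul] at h
      simpa [Fin.prod_univ_one, one_div] using h
    · -- `m ≥ 1`, so `β ≥ m+1 ≥ 2 > 1`
      have hβ1 : (1 : ℝ) < β := by
        have : (2 : ℝ) ≤ (m + 1 : ℕ) := by exact_mod_cast Nat.succ_le_succ hm
        linarith
      have hconj : β.HolderConjugate (β / (β - 1)) := Real.HolderConjugate.conjExponent hβ1
      set γ := β / (β - 1) with hγdef
      have hγpos : 0 < γ := hconj.symm.pos
      have hγβ : γ * (β - 1) = β := by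
        rw [hγdef]
        exact div_mul_cancel₀ β hconj.sub_one_ne_zero
      -- split off the first factor
      have hsplit : ∀ z, ∏ i, r i z = r 0 z * ∏ i : Fin m, r i.succ z := by
        intro z; exact Fin.prod_univ_succ _
      have hH := weighted_holder q (fun z => r 0 z) (fun z => ∏ i : Fin m, r i.succ z)
        hq (fun z => (hr 0 z).le)
        (fun z => Finset.prod_nonneg fun (i : Fin m) _ => (hr i.succ z).le) hconj
      -- bound the second factor using the inductive hypothesis at exponent `β - 1`
      have hprod_pow : ∀ z, (∏ i : Fin m, r i.succ z) ^ γ = ∏ i : Fin m, r i.succ z ^ γ := by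
        intro z
        exact (Real.finset_prod_rpow _ _ (fun (i : Fin m) _ => (hr i.succ z).le) _).symm
      have hIH := ih (fun (i : Fin m) z => r i.succ z ^ γ) (fun (i : Fin m) z => Real.rpow_pos_of_pos (hr i.succ z) γ)
        (β - 1) (by push_cast at hβ ⊢; linarith)
      have hpow_pow : ∀ (i : Fin m) (z : Z), (r i.succ z ^ γ) ^ (β - 1) = r i.succ z ^ β := by
        intro i z
        rw [← Real.rpow_mul (hr i.succ z).le, hγβ]
      simp only [hpow_pow] at hIH
      -- raise to the power `1/γ`
      have hsum_nonneg : ∀ (f : Z → ℝ), (∀ z, 0 ≤ f z) → 0 ≤ ∑ z, q z * f z := by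
        intro f hf
        exact Finset.sum_nonneg fun z _ => mul_nonneg (hq z).le (hf z)
      have hstep : (∑ z, q z * (∏ i : Fin m, r i.succ z) ^ γ) ^ (1 / γ) ≤
          ∏ i : Fin m, (∑ z, q z * r i.succ z ^ β) ^ (1 / β) := by
        have h1 : (∑ z, q z * (∏ i : Fin m, r i.succ z) ^ γ) ^ (1 / γ) ≤
            (∏ i : Fin m, (∑ z, q z * r i.succ z ^ β) ^ (1 / (β - 1))) ^ (1 / γ) := by
          apply Real.rpow_le_rpow
          · exact hsum_nonneg _ fun z => Real.rpow_nonneg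
              (Finset.prod_nonneg fun (i : Fin m) _ => (hr i.succ z).le) _
          · calc ∑ z, q z * (∏ i : Fin m, r i.succ z) ^ γ
                = ∑ z, q z * ∏ i : Fin m, r i.succ z ^ γ := by
                  refine Finset.sum_congr rfl fun z _ => ?_; rw [hprod_pow]
              _ ≤ ∏ i : Fin m, (∑ z, q z * r i.succ z ^ β) ^ (1 / (β - 1)) := hIH
          · positivity
        refine h1.trans (le_of_eq ?_)
        rw [← Real.finset_prod_rpow _ _ (fun (i : Fin m) _ => Real.rpow_nonneg
          (hsum_nonneg _ fun z => Real.rpow_nonneg (hr i.succ z).le _) _) _]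
        refine Finset.prod_congr rfl fun i _ => ?_
        rw [← Real.rpow_mul (hsum_nonneg _ fun z => Real.rpow_nonneg (hr i.succ z).le _)]
        congr 1
        rw [div_mul_div_comm, one_mul]
        congr 1
        rw [mul_comm, hγβ]
      calc ∑ z, q z * ∏ i, r i z
          = ∑ z, q z * (r 0 z * ∏ i : Fin m, r i.succ z) := by
            refine Finset.sum_congr rfl fun z _ => ?_; rw [hsplit]
        _ ≤ (∑ z, q z * r 0 z ^ β) ^ (1 / β) *
              (∑ z, q z * (∏ i : Fin m, r i.succ z) ^ γ) ^ (1 / γ) := hH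
        _ ≤ (∑ z, q z * r 0 z ^ β) ^ (1 / β) *
              ∏ i : Fin m, (∑ z, q z * r i.succ z ^ β) ^ (1 / β) := by
            apply mul_le_mul_of_nonneg_left hstep
            exact Real.rpow_nonneg (Finset.sum_nonneg fun z _ =>
              mul_nonneg (hq z).le (Real.rpow_nonneg (hr 0 z).le _)) _
        _ = ∏ i, (∑ z, q z * r i z ^ β) ^ (1 / β) :=
            (Fin.prod_univ_succ fun i => (∑ z, q z * r i z ^ β) ^ (1 / β)).symm

/-- **Constant-free evidence upper bound (Theorem 1, case `β ≥ n`).**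
For a strictly positive pmf `q` on a nonempty finite type `Z`, every real `β ≥ n`, and
positive functions `r 1, …, r n`, the log of the expected product is bounded by the
sum of the `β`-Rényi terms (the constant `C(T)` vanishes). -/
theorem abstract_evidence_upper_bound_of_n_le_beta {Z : Type*} [Fintype Z] [Nonempty Z]
    (q : Z → ℝ) (hq_nonneg : ∀ z, 0 ≤ q z) (hq_pos : ∀ z, 0 < q z)
    (hq_sum : ∑ z, q z = 1)
    {n : ℕ} (hn : 1 ≤ n) (r : Fin n → Z → ℝ) (hr : ∀ i z, 0 < r i z)
    {β : ℝ} (hβ : (n : ℝ) ≤ β) :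
    Real.log (∑ z, q z * ∏ i, r i z) ≤
      (1 / β) * ∑ i, Real.log (∑ z, q z * r i z ^ β) := by
  have hβ0 : 0 < β := lt_of_lt_of_le (by exact_mod_cast hn) hβ
  have key := holder_prod q hq_pos hq_sum n r hr β hβ
  have hsum_pos : ∀ i, 0 < ∑ z, q z * r i z ^ β := by
    intro i
    exact Finset.sum_pos (fun z _ => mul_pos (hq_pos z)
      (Real.rpow_pos_of_pos (hr i z) β)) Finset.univ_nonempty
  have hLHS_pos : 0 < ∑ z, q z * ∏ i, r i z := by
    exact Finset.sum_pos (fun z _ => mul_pos (hq_pos z)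
      (Finset.prod_pos fun i _ => hr i z)) Finset.univ_nonempty
  calc Real.log (∑ z, q z * ∏ i, r i z)
      ≤ Real.log (∏ i, (∑ z, q z * r i z ^ β) ^ (1 / β)) := Real.log_le_log hLHS_pos key
    _ = ∑ i, Real.log ((∑ z, q z * r i z ^ β) ^ (1 / β)) :=
        Real.log_prod fun i _ => (Real.rpow_pos_of_pos (hsum_pos i) _).ne'
    _ = ∑ i, (1 / β) * Real.log (∑ z, q z * r i z ^ β) := by
        refine Finset.sum_congr rfl fun i _ => ?_
        rw [Real.log_rpow (hsum_pos i)]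
    _ = (1 / β) * ∑ i, Real.log (∑ z, q z * r i z ^ β) := by
        rw [Finset.mul_sum]
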